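/- Let p be an odd prime, λ a strict partition of n with l parts none divisible by p, containing parts n_{j_0} and p − n_{j_0} (both < p). Let λ' be λ with both parts removed ('type 3' bar operation). With N_λ^η defined as (−1)^{⌊(n−l)/2⌋} ∏_{n_j odd} n_j ∏_{n_j even} n_j/(2η), one has (N_λ^η/p)·(N_{λ'}^η/p) = ((−1)/p)^{n−l}·(2η/p). -/

import Mathlib

/-- The quantity `N_λ^η = (−1)^{⌊(n−l)/2⌋} · ∏_{n_j odd} n_j · ∏_{n_j even} n_j/(2η)`
attached to a strict partition `λ` (given as a list of parts) of `n` into `l` parts. -/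
def NvalQ (η : ℤ) (L : List ℕ) : ℚ :=
  (-1 : ℚ) ^ ((L.sum - L.length) / 2) *
    (((L.filter (fun x => x % 2 = 1)).map (fun x => (x : ℚ))).prod) *
    (((L.filter (fun x => x % 2 = 0)).map (fun x => (x : ℚ) / (2 * (η : ℚ)))).prod)

/-- The Legendre symbol of a rational number `r = a/b` (in lowest terms), defined as
`(a/p)·(b/p)`. -/
def legQ (p : ℕ) [Fact p.Prime] (r : ℚ) : ℤ :=
  legendreSym p r.num * legendreSym p (r.den : ℤ)

private lemma map_cast_prod' (l : List ℕ) :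
    (List.map (fun x : ℕ => (x : ℚ)) l).prod = (l.prod : ℚ) := by
  induction l with
  | nil => simp
  | cons x l ih => rw [List.map_cons, List.prod_cons, ih, List.prod_cons, Nat.cast_mul]

private lemma map_div_prod' (c : ℚ) (l : List ℕ) :
    (List.map (fun x : ℕ => (x : ℚ) / c) l).prod = (l.prod : ℚ) / c ^ l.length := by
  induction l with
  | nil => simp
  | cons x l ih =>
    simp only [List.map_cons, List.prod_cons, ih, List.length_cons, List.sum_cons,
      pow_succ, Nat.cast_mul]
    ring

private lemma nval_eq_div (η : ℤ) (L : List ℕ) :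
    NvalQ η L =
      ((((-1 : ℤ) ^ ((L.sum - L.length) / 2) *
        (((L.filter (fun x => x % 2 = 1)).prod * (L.filter (fun x => x % 2 = 0)).prod : ℕ) : ℤ)) : ℤ) : ℚ)
      / (((2 * η) ^ ((L.filter (fun x => x % 2 = 0)).length) : ℤ) : ℚ) := by
  unfold NvalQ
  simp only [bind_pure_comp, List.map_eq_map, List.map_map, Function.comp_def]
  rw [map_cast_prod', map_div_prod']
  push_cast
  rw [List.map_map, List.map_map]
  simp only [Function.comp_def, Int.cast_natCast]
  ring

private lemma length_le_sum' (l : List ℕ) (h : ∀ x ∈ l, 0 < x) : l.length ≤ l.sum := by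
  induction l with
  | nil => simp
  | cons x l ih =>
    simp only [List.length_cons, List.sum_cons]
    have h1 := h x (by simp)
    have h2 := ih (fun y hy => h y (by simp [hy]))
    omega

private lemma prod_cast_ne (p : ℕ) [Fact p.Prime] (l : List ℕ) (h : ∀ x ∈ l, ¬ p ∣ x) :
    ((l.prod : ℕ) : ZMod p) ≠ 0 := by
  rw [Nat.cast_list_prod]
  refine List.prod_ne_zero ?_
  intro h0
  rw [List.mem_map] at h0
  obtain ⟨x, hxm, h0⟩ := h0
  exact h x hxm ((ZMod.natCast_eq_zero_iff x p).mp h0)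

private lemma legendreSym_pow (p : ℕ) [Fact p.Prime] (u : ℤ) (k : ℕ) :
    legendreSym p (u ^ k) = legendreSym p u ^ k := by
  induction k with
  | zero => simp
  | succ k ih => rw [pow_succ, legendreSym.mul, ih, pow_succ]

private lemma legQ_spec (p : ℕ) [Fact p.Prime] (x y : ℤ) (hy : (y : ℚ) ≠ 0)
    (hx' : ((x : ℤ) : ZMod p) ≠ 0) (hy' : ((y : ℤ) : ZMod p) ≠ 0) :
    legQ p ((x : ℚ) / (y : ℚ)) = legendreSym p x * legendreSym p y := by
  set r : ℚ := (x : ℚ) / (y : ℚ) with hr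
  have hdenQ : ((r.den : ℚ)) ≠ 0 := Nat.cast_ne_zero.mpr r.den_nz
  have hkey : (r.num : ℚ) * y = x * r.den := by
    have h1 : (r.num : ℚ) / r.den = (x : ℚ) / y := by rw [Rat.num_div_den]
    exact (div_eq_div_iff hdenQ hy).mp h1
  have hkeyZ : r.num * y = x * (r.den : ℤ) := by exact_mod_cast hkey
  have hp : p.Prime := Fact.out
  have hcop : ¬ ((p : ℤ) ∣ r.num ∧ (p : ℤ) ∣ (r.den : ℤ)) := by
    rintro ⟨h1, h2⟩
    have hd1 : p ∣ r.num.natAbs := by simpa using Int.natAbs_dvd_natAbs.mpr h1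
    have hd2 : p ∣ r.den := by exact_mod_cast h2
    have hg : Nat.gcd r.num.natAbs r.den = 1 := r.reduced
    have : p ∣ 1 := hg ▸ Nat.dvd_gcd hd1 hd2
    exact hp.one_lt.ne' (Nat.dvd_one.mp this)
  have hnum0 : ((r.num : ℤ) : ZMod p) ≠ 0 := by
    intro h0
    have h1 : (p : ℤ) ∣ r.num := by rwa [ZMod.intCast_zmod_eq_zero_iff_dvd] at h0
    have hxy : ((x * (r.den : ℤ) : ℤ) : ZMod p) = 0 := by
      rw [← hkeyZ]; push_cast; rw [h0]; ring
    push_cast at hxy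
    rcases mul_eq_zero.mp hxy with h | h
    · exact hx' h
    · refine hcop ⟨h1, ?_⟩
      rw [← ZMod.intCast_zmod_eq_zero_iff_dvd]
      push_cast
      exact h
  have hden0 : (((r.den : ℤ)) : ZMod p) ≠ 0 := by
    intro h0
    have h2 : (p : ℤ) ∣ (r.den : ℤ) := by rwa [ZMod.intCast_zmod_eq_zero_iff_dvd] at h0
    have hxy : ((r.num * y : ℤ) : ZMod p) = 0 := by
      rw [hkeyZ]; push_cast; push_cast at h0; rw [h0]; ring
    push_cast at hxy
    rcases mul_eq_zero.mp hxy with h | h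
    · refine hcop ⟨?_, h2⟩
      rwa [ZMod.intCast_zmod_eq_zero_iff_dvd] at h
    · exact hy' h
  have e1 : legendreSym p r.num * legendreSym p y
      = legendreSym p x * legendreSym p (r.den : ℤ) := by
    rw [← legendreSym.mul, ← legendreSym.mul, hkeyZ]
  have e2 : legendreSym p y ^ 2 = 1 := legendreSym.sq_one p hy'
  have e3 : legendreSym p ((r.den : ℤ)) ^ 2 = 1 := legendreSym.sq_one p hden0
  rw [legQ]
  linear_combination (legendreSym p (r.den : ℤ) * legendreSym p y) * e1
    - (legendreSym p r.num * legendreSym p (r.den : ℤ)) * e2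
    + (legendreSym p x * legendreSym p y) * e3

theorem stmt_15 (p : ℕ) [Fact p.Prime] (hodd : p ≠ 2) (η : ℤ) (hη : η = 1 ∨ η = -1)
    (L L' : List ℕ) (hL : L.Pairwise (· > ·)) (hL' : L'.Pairwise (· > ·))
    (hpos : ∀ x ∈ L, 0 < x) (hndvd : ∀ x ∈ L, ¬ p ∣ x)
    (a : ℕ) (ha : a ∈ L) (hap : a < p) (ha' : p - a ∈ L)
    (hrel : (L' : Multiset ℕ) = ((L : Multiset ℕ).erase a).erase (p - a)) :
    legQ p (NvalQ η L) * legQ p (NvalQ η L') =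
      (legendreSym p (-1)) ^ (L.sum - L.length) * legendreSym p (2 * η) := by
  have hp : p.Prime := Fact.out
  have hp2 : p % 2 = 1 := by
    rcases hp.eq_two_or_odd with h | h
    · exact absurd h hodd
    · exact h
  have hp3 : 3 ≤ p := by have := hp.two_le; omega
  set b := p - a with hbdef
  have ha0 : 0 < a := hpos a ha
  have hb0 : 0 < b := hpos b ha'
  have hab : a + b = p := by omega
  have hne : a ≠ b := by omega
  -- the permutation L ~ a :: b :: L'
  have hbe : b ∈ (L : Multiset ℕ).erase a :=
    (Multiset.mem_erase_of_ne hne.symm).mpr (by exact_mod_cast ha')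
  have hML : (L : Multiset ℕ) = a ::ₘ b ::ₘ (L' : Multiset ℕ) := by
    rw [hrel, Multiset.cons_erase hbe,
      Multiset.cons_erase (show a ∈ (L : Multiset ℕ) from by exact_mod_cast ha)]
  have hperm : L.Perm (a :: b :: L') := by
    rw [← Multiset.coe_eq_coe]
    simpa using hML
  have hmem' : ∀ x ∈ L', x ∈ L := fun x hx => hperm.mem_iff.mpr (by simp [hx])
  have hndvd' : ∀ x ∈ L', ¬ p ∣ x := fun x hx => hndvd x (hmem' x hx)
  have hpos' : ∀ x ∈ L', 0 < x := fun x hx => hpos x (hmem' x hx)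
  have hpa : ¬ p ∣ a := hndvd a ha
  -- sums and lengths
  have hsum : L.sum = a + (b + L'.sum) := by simpa using hperm.sum_eq
  have hlen : L.length = L'.length + 2 := by simpa using hperm.length_eq
  have hsk : L'.length ≤ L'.sum := length_le_sum' L' hpos'
  -- filter facts
  have hparity : (a % 2 = 1 ∧ b % 2 = 0) ∨ (a % 2 = 0 ∧ b % 2 = 1) := by omega
  have hfo := hperm.filter (fun x => x % 2 = 1)
  have hfe := hperm.filter (fun x => x % 2 = 0)
  have hAB : (L.filter (fun x => x % 2 = 1)).prod * (L.filter (fun x => x % 2 = 0)).prod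
      = (a * b) * ((L'.filter (fun x => x % 2 = 1)).prod * (L'.filter (fun x => x % 2 = 0)).prod)
      ∧ (L.filter (fun x => x % 2 = 0)).length = (L'.filter (fun x => x % 2 = 0)).length + 1 := by
    rcases hparity with ⟨h1, h2⟩ | ⟨h1, h2⟩
    · have ho : (a :: b :: L').filter (fun x => x % 2 = 1)
          = a :: L'.filter (fun x => x % 2 = 1) := by
        simp [List.filter_cons, h1, h2]
      have he : (a :: b :: L').filter (fun x => x % 2 = 0)
          = b :: L'.filter (fun x => x % 2 = 0) := by
        simp [List.filter_cons, h1, h2]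
      rw [hfo.prod_eq, hfe.prod_eq, hfe.length_eq, ho, he]
      refine ⟨by simp [List.prod_cons]; ring, by simp⟩
    · have ho : (a :: b :: L').filter (fun x => x % 2 = 1)
          = b :: L'.filter (fun x => x % 2 = 1) := by
        simp [List.filter_cons, h1, h2]
      have he : (a :: b :: L').filter (fun x => x % 2 = 0)
          = a :: L'.filter (fun x => x % 2 = 0) := by
        simp [List.filter_cons, h1, h2]
      rw [hfo.prod_eq, hfe.prod_eq, hfe.length_eq, ho, he]
      refine ⟨by simp [List.prod_cons]; ring, by simp⟩
  obtain ⟨hABprod, hABlen⟩ := hAB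
  -- abbreviations
  set e : ℕ := (L.sum - L.length) / 2 with hedef
  set e' : ℕ := (L'.sum - L'.length) / 2 with he'def
  set A : ℕ := (L.filter (fun x => x % 2 = 1)).prod with hA
  set B : ℕ := (L.filter (fun x => x % 2 = 0)).prod with hB
  set A' : ℕ := (L'.filter (fun x => x % 2 = 1)).prod with hA'
  set B' : ℕ := (L'.filter (fun x => x % 2 = 0)).prod with hB'
  set t : ℕ := (L.filter (fun x => x % 2 = 0)).length with ht
  set t' : ℕ := (L'.filter (fun x => x % 2 = 0)).length with ht'
  -- nonvanishing facts mod p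
  have hcastA : ((A : ℕ) : ZMod p) ≠ 0 := by
    rw [hA]; exact prod_cast_ne p _ (fun x hx => hndvd x (List.mem_of_mem_filter hx))
  have hcastB : ((B : ℕ) : ZMod p) ≠ 0 := by
    rw [hB]; exact prod_cast_ne p _ (fun x hx => hndvd x (List.mem_of_mem_filter hx))
  have hcastA' : ((A' : ℕ) : ZMod p) ≠ 0 := by
    rw [hA']; exact prod_cast_ne p _ (fun x hx => hndvd' x (List.mem_of_mem_filter hx))
  have hcastB' : ((B' : ℕ) : ZMod p) ≠ 0 := by
    rw [hB']; exact prod_cast_ne p _ (fun x hx => hndvd' x (List.mem_of_mem_filter hx))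
  have hm1 : ((-1 : ℤ) : ZMod p) ≠ 0 := by
    simp only [Int.cast_neg, Int.cast_one]
    exact neg_ne_zero.mpr one_ne_zero
  have h2η : ((2 * η : ℤ) : ZMod p) ≠ 0 := by
    have h2 : ((2 : ℕ) : ZMod p) ≠ 0 := by
      intro h
      exact hodd ((Nat.prime_dvd_prime_iff_eq hp Nat.prime_two).mp
        ((ZMod.natCast_eq_zero_iff 2 p).mp h))
    rcases hη with h | h <;> subst h <;> push_cast at h2 ⊢ <;> simp [h2]
  have hX : (((-1 : ℤ) ^ e * ((A * B : ℕ) : ℤ) : ℤ) : ZMod p) ≠ 0 := by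
    push_cast
    exact mul_ne_zero (pow_ne_zero _ (neg_ne_zero.mpr one_ne_zero))
      (by exact_mod_cast mul_ne_zero hcastA hcastB)
  have hX' : (((-1 : ℤ) ^ e' * ((A' * B' : ℕ) : ℤ) : ℤ) : ZMod p) ≠ 0 := by
    push_cast
    exact mul_ne_zero (pow_ne_zero _ (neg_ne_zero.mpr one_ne_zero))
      (by exact_mod_cast mul_ne_zero hcastA' hcastB')
  have hYcast : ∀ k : ℕ, (((2 * η) ^ k : ℤ) : ZMod p) ≠ 0 := by
    intro k; push_cast; push_cast at h2η; exact pow_ne_zero _ h2η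
  have hYQ : ∀ k : ℕ, (((2 * η) ^ k : ℤ) : ℚ) ≠ 0 := by
    intro k
    have h0 : (2 * η : ℤ) ≠ 0 := by rcases hη with h | h <;> subst h <;> decide
    push_cast
    exact pow_ne_zero _ (by rcases hη with h | h <;> subst h <;> norm_num)
  -- rewrite legQ via legQ_spec
  have hL1 : legQ p (NvalQ η L)
      = legendreSym p ((-1 : ℤ) ^ e * ((A * B : ℕ) : ℤ)) * legendreSym p ((2 * η) ^ t) := by
    have hform : NvalQ η L
        = ((((-1 : ℤ) ^ e * ((A * B : ℕ) : ℤ)) : ℤ) : ℚ) / (((2 * η) ^ t : ℤ) : ℚ) := by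
      rw [hedef, hA, hB, ht, Nat.cast_mul]
      rw [nval_eq_div η L]
      push_cast
      ring
    rw [hform]
    exact legQ_spec p _ _ (hYQ t) hX (hYcast t)
  have hL2 : legQ p (NvalQ η L')
      = legendreSym p ((-1 : ℤ) ^ e' * ((A' * B' : ℕ) : ℤ)) * legendreSym p ((2 * η) ^ t') := by
    have hform : NvalQ η L'
        = ((((-1 : ℤ) ^ e' * ((A' * B' : ℕ) : ℤ)) : ℤ) : ℚ) / (((2 * η) ^ t' : ℤ) : ℚ) := by
      rw [he'def, hA', hB', ht', Nat.cast_mul]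
      rw [nval_eq_div η L']
      push_cast
      ring
    rw [hform]
    exact legQ_spec p _ _ (hYQ t') hX' (hYcast t')
  rw [hL1, hL2]
  -- the (2η)-part
  have h2sq : legendreSym p (2 * η) ^ 2 = 1 := legendreSym.sq_one p h2η
  have hYY : legendreSym p ((2 * η) ^ t) * legendreSym p ((2 * η) ^ t')
      = legendreSym p (2 * η) := by
    rw [legendreSym_pow, legendreSym_pow, ← pow_add,
      show t + t' = 2 * t' + 1 by omega, pow_succ, pow_mul, h2sq, one_pow, one_mul]
  -- the (-1)-part
  have hab2 : legendreSym p ((a * b : ℕ) : ℤ) = legendreSym p (-1) := by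
    have hbcast : ((b : ℕ) : ZMod p) = -(a : ZMod p) := by
      rw [hbdef, Nat.cast_sub hap.le, ZMod.natCast_self, zero_sub]
    have hacast : ((a : ℕ) : ZMod p) ≠ 0 := by
      intro h
      exact hpa ((ZMod.natCast_eq_zero_iff a p).mp h)
    have h1 : (((a * b : ℕ) : ℤ) : ZMod p) = (-1) * ((a : ZMod p)) ^ 2 := by
      push_cast
      rw [hbcast]; ring
    have h2 : legendreSym p ((a * b : ℕ) : ℤ)
        = quadraticChar (ZMod p) ((((a * b : ℕ) : ℤ)) : ZMod p) := rfl
    have h3 : legendreSym p (-1) = quadraticChar (ZMod p) ((-1 : ZMod p)) := by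
      rw [legendreSym]; norm_num
    rw [h2, h1, map_mul, map_pow, quadraticChar_sq_one hacast, mul_one, h3]
  have hABZ : ((A * B : ℕ) : ℤ) = ((a * b : ℕ) : ℤ) * ((A' * B' : ℕ) : ℤ) := by
    exact_mod_cast hABprod
  have hXXe : ((-1 : ℤ) ^ e * ((A * B : ℕ) : ℤ)) * ((-1 : ℤ) ^ e' * ((A' * B' : ℕ) : ℤ))
      = (-1 : ℤ) ^ (e + e') * (((a * b : ℕ) : ℤ) * (((A' * B' : ℕ) : ℤ)) ^ 2) := by
    rw [hABZ, pow_add]; ring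
  have hA'B' : (((A' * B' : ℕ) : ℤ) : ZMod p) ≠ 0 := by
    push_cast
    exact_mod_cast mul_ne_zero hcastA' hcastB'
  have hXX : legendreSym p ((-1 : ℤ) ^ e * ((A * B : ℕ) : ℤ))
      * legendreSym p ((-1 : ℤ) ^ e' * ((A' * B' : ℕ) : ℤ))
      = legendreSym p (-1) ^ (e + e') * legendreSym p (-1) := by
    rw [← legendreSym.mul, hXXe, legendreSym.mul, legendreSym.mul,
      legendreSym_pow, legendreSym_pow, legendreSym.sq_one p hA'B', mul_one, hab2]
  calc legendreSym p ((-1 : ℤ) ^ e * ((A * B : ℕ) : ℤ)) * legendreSym p ((2 * η) ^ t) *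
        (legendreSym p ((-1 : ℤ) ^ e' * ((A' * B' : ℕ) : ℤ)) * legendreSym p ((2 * η) ^ t'))
      = (legendreSym p ((-1 : ℤ) ^ e * ((A * B : ℕ) : ℤ))
          * legendreSym p ((-1 : ℤ) ^ e' * ((A' * B' : ℕ) : ℤ)))
        * (legendreSym p ((2 * η) ^ t) * legendreSym p ((2 * η) ^ t')) := by ring
    _ = (legendreSym p (-1) ^ (e + e') * legendreSym p (-1)) * legendreSym p (2 * η) := by
        rw [hXX, hYY]
    _ = legendreSym p (-1) ^ (L.sum - L.length) * legendreSym p (2 * η) := by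
        congr 1
        rw [← pow_succ]
        rcases legendreSym.eq_one_or_neg_one p (a := -1) hm1 with hs | hs
        · rw [hs, one_pow, one_pow]
        · rw [hs]
          have hnsq : ¬ IsSquare (-1 : ZMod p) := by
            have := (legendreSym.eq_neg_one_iff p (a := -1)).mp hs
            simpa using this
          have h4 : p % 4 = 3 := by
            by_contra h
            exact hnsq (ZMod.exists_sq_eq_neg_one_iff.mpr h)
          have hpar : (e + e' + 1) % 2 = (L.sum - L.length) % 2 := by
            rw [hedef, he'def]
            omega
          rcases Nat.even_or_odd (e + e' + 1) with hev | hodd'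
          · rw [hev.neg_one_pow, (Nat.even_iff.mpr (by
              rw [← hpar]; exact Nat.even_iff.mp hev)).neg_one_pow]
          · rw [hodd'.neg_one_pow, (Nat.odd_iff.mpr (by
              rw [← hpar]; exact Nat.odd_iff.mp hodd')).neg_one_pow]
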